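/- Let k ≥ 1 be an integer and let G be a mono-C3-free edge-colored complete graph K_n with n ≥ (k+2)!. Then G contains a properly colored copy of every tree with k edges. -/

import Mathlib

/-- An edge-coloring of `K_n` (on vertex set `Fin n`) has no monochromatic triangle. -/
def MonoC3Free (n : ℕ) (c : Fin n → Fin n → ℕ) : Prop :=
  ∀ u v w : Fin n, u ≠ v → v ≠ w → u ≠ w → ¬(c u v = c v w ∧ c u v = c u w)

namespace PCTreeAux

open Finset SimpleGraph

/-- Local Ramsey bound. -/
def L : ℕ → ℕ
  | 0 => 1
  | t + 1 => (t + 1) * L t + 1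

lemma two_mul_L_le (t : ℕ) : 2 * L t ≤ (t + 2).factorial := by
  induction t with
  | zero => simp [L, Nat.factorial]
  | succ t ih =>
    have h1 : (t + 3).factorial = (t + 3) * (t + 2).factorial := rfl
    have h2 : 1 ≤ (t + 2).factorial := (t + 2).factorial_pos
    have : 2 * L (t + 1) = (t + 1) * (2 * L t) + 2 := by rw [L]; ring
    calc 2 * L (t + 1) = (t + 1) * (2 * L t) + 2 := this
      _ ≤ (t + 1) * (t + 2).factorial + 2 := by
          have := Nat.mul_le_mul_left (t + 1) ih; omega
      _ ≤ (t + 3) * (t + 2).factorial := by nlinarith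
      _ = (t + 3).factorial := h1.symm

variable {n : ℕ} {c : Fin n → Fin n → ℕ}

lemma local_ramsey (hsym : ∀ u v, c u v = c v u) (hmono : MonoC3Free n c) :
    ∀ (t : ℕ) (X : Finset (Fin n)),
      (∀ x ∈ X, ∃ F : Finset ℕ, F.card ≤ t ∧ ∀ y ∈ X, y ≠ x → c x y ∈ F) →
      X.card ≤ L t := by
  classical
  intro t
  induction t with
  | zero =>
    intro X hX
    by_contra hc
    push_neg at hc
    rw [L] at hc
    obtain ⟨x, hx, y, hy, hxy⟩ := Finset.one_lt_card.mp hc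
    obtain ⟨F, hF0, hF⟩ := hX x hx
    have := hF y hy (Ne.symm hxy)
    rw [Nat.le_zero, Finset.card_eq_zero] at hF0
    simp [hF0] at this
  | succ t ih =>
    intro X hX
    by_contra hc
    push_neg at hc
    rw [L] at hc
    have hXne : X.Nonempty := Finset.card_pos.mp (by omega)
    obtain ⟨x, hx⟩ := hXne
    obtain ⟨F, hFc, hF⟩ := hX x hx
    have hmaps : ∀ y ∈ X.erase x, (fun y => c x y) y ∈ F := by
      intro y hy
      exact hF y (Finset.mem_of_mem_erase hy) (Finset.ne_of_mem_erase hy)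
    have hlt : F.card * L t < (X.erase x).card := by
      rw [Finset.card_erase_of_mem hx]
      have : F.card * L t ≤ (t + 1) * L t := Nat.mul_le_mul_right _ hFc
      omega
    obtain ⟨γ, hγF, hfib⟩ :=
      Finset.exists_lt_card_fiber_of_mul_lt_card_of_maps_to hmaps hlt
    set Y := {z ∈ X.erase x | c x z = γ} with hY
    have hYle : Y.card ≤ L t := by
      apply ih
      intro y hy
      rw [hY, Finset.mem_filter] at hy
      obtain ⟨hy1, hcxy⟩ := hy
      have hyX : y ∈ X := Finset.mem_of_mem_erase hy1
      have hyx : y ≠ x := Finset.ne_of_mem_erase hy1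
      obtain ⟨Fy, hFyc, hFy⟩ := hX y hyX
      have hγFy : γ ∈ Fy := by
        have := hFy x hx (fun h => hyx h.symm)
        rwa [hsym y x, hcxy] at this
      refine ⟨Fy.erase γ, ?_, ?_⟩
      · rw [Finset.card_erase_of_mem hγFy]; omega
      · intro z hz hzy
        rw [hY, Finset.mem_filter] at hz
        obtain ⟨hz1, hcxz⟩ := hz
        have hzX : z ∈ X := Finset.mem_of_mem_erase hz1
        have hzx : z ≠ x := Finset.ne_of_mem_erase hz1
        have hmem : c y z ∈ Fy := hFy z hzX hzy
        have hne : c y z ≠ γ := by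
          intro h
          exact hmono x y z (fun h' => hyx h'.symm) (fun h' => hzy h'.symm)
            (fun h' => hzx h'.symm) ⟨by rw [hcxy, h], by rw [hcxy, hcxz]⟩
        exact Finset.mem_erase.mpr ⟨hne, hmem⟩
    omega

open Finset SimpleGraph SimpleGraph.Walk


lemma concat_isPath {V : Type*} {G : SimpleGraph V} {u v w : V} {p : G.Walk u v}
    (hp : p.IsPath) (h : G.Adj v w) (hw : w ∉ p.support) : (p.concat h).IsPath := by
  rw [Walk.isPath_def, Walk.support_concat]
  rw [Walk.isPath_def] at hp
  simp [List.nodup_append, hp, hw]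
  exact fun a ha hEq => hw (hEq ▸ ha)

lemma tree_parent {m : ℕ} (T : SimpleGraph (Fin (m + 1))) (hT : T.IsTree) :
    ∃ (r : Fin (m + 1)) (P : Fin (m + 1) → Fin (m + 1)) (ρ : Fin (m + 1) → ℕ),
      (∀ v, v ≠ r → T.Adj (P v) v) ∧
      (∀ v, v ≠ r → ρ (P v) < ρ v) ∧
      (∀ x y, T.Adj x y → (x ≠ r ∧ P x = y) ∨ (y ≠ r ∧ P y = x)) := by
  classical
  have hu : ∀ ⦃v w : Fin (m + 1)⦄ (p q : T.Path v w), p = q :=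
    SimpleGraph.isAcyclic_iff_path_unique.mp hT.IsAcyclic
  set r : Fin (m + 1) := 0 with hr
  have hreach : ∀ v, T.Reachable r v := fun v => hT.isConnected.preconnected r v
  have hex : ∀ v, ∃ p : T.Path r v, True := by
    intro v
    exact (hreach v).elim fun w => ⟨w.toPath, trivial⟩
  choose pv _ using hex
  have huniq : ∀ (v : Fin (m + 1)) (q : T.Walk r v), q.IsPath →
      (pv v : T.Walk r v) = q := by
    intro v q hq
    exact congrArg Subtype.val (hu (pv v) ⟨q, hq⟩)
  have DEC : ∀ v, v ≠ r → ∃ u, ∃ h : T.Adj u v, ∃ q : T.Walk r u,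
      q.IsPath ∧ (pv v : T.Walk r v) = q.concat h := by
    intro v hv
    obtain ⟨u, h, q, hq⟩ :=
      Walk.not_nil_iff.mp (Walk.not_nil_of_ne (Ne.symm hv) (p := (pv v : T.Walk r v)))
    obtain ⟨x, q', h', he⟩ := Walk.exists_cons_eq_concat h q
    have hpath : (q'.concat h').IsPath := by
      rw [← he, ← hq]; exact (pv v).2
    refine ⟨x, h', q', ?_, by rw [hq, he]⟩
    rw [Walk.concat_eq_append] at hpath
    exact hpath.of_append_left
  choose! P hP using DEC
  have hnilr : (pv r : T.Walk r r) = Walk.nil := huniq r Walk.nil (Walk.IsPath.nil)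
  refine ⟨r, P, fun v => (pv v : T.Walk r v).length, ?_, ?_, ?_⟩
  · intro v hv
    obtain ⟨h, q, hq, he⟩ := hP v hv
    exact h
  · intro v hv
    obtain ⟨h, q, hq, he⟩ := hP v hv
    have h1 : (pv (P v) : T.Walk r (P v)) = q := huniq _ q hq
    have h2 : (pv v : T.Walk r v).length = q.length + 1 := by
      rw [he, Walk.length_concat]
    have h3 : (pv (P v) : T.Walk r (P v)).length = q.length := by rw [h1]
    show (pv (P v) : T.Walk r (P v)).length < (pv v : T.Walk r v).length
    omega
  · intro x y hxy
    by_cases hy : y ∈ (pv x : T.Walk r x).support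
    · by_cases hx : x ∈ (pv y : T.Walk r y).support
      · exfalso
        set w := (pv y : T.Walk r y) with hw
        have htk : (pv x : T.Walk r x) = w.takeUntil x hx :=
          huniq x _ ((pv y).2.takeUntil hx)
        rw [htk] at hy
        have hnodup : w.support.Nodup := (pv y).2.support_nodup
        have hsplit : (w.takeUntil x hx).append (w.dropUntil x hx) = w :=
          Walk.take_spec w hx
        have hnodup2 : ((w.takeUntil x hx).support
            ++ (w.dropUntil x hx).support.tail).Nodup := by
          rw [← Walk.support_append, hsplit]; exact hnodup
        have hytail : y ∈ (w.dropUntil x hx).support.tail := by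
          have h1 : y ∈ (w.dropUntil x hx).support := Walk.end_mem_support _
          rw [Walk.support_eq_cons] at h1
          rcases List.mem_cons.mp h1 with h2 | h2
          · exact absurd h2.symm hxy.ne
          · exact h2
        exact (List.disjoint_of_nodup_append hnodup2) hy hytail
      · -- x ∉ support (pv y): P x = y
        left
        have hpath : ((pv y : T.Walk r y).concat hxy.symm).IsPath :=
          concat_isPath (pv y).2 hxy.symm hx
        have heq : (pv x : T.Walk r x) = (pv y : T.Walk r y).concat hxy.symm :=
          huniq x _ hpath
        have hxr : x ≠ r := by
          intro h
          subst h
          rw [hnilr] at heq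
          have := congrArg Walk.length heq
          rw [Walk.length_concat] at this
          simp at this
        obtain ⟨h, q, hq, he⟩ := hP x hxr
        have : q.concat h = (pv y : T.Walk r y).concat hxy.symm := by
          rw [← he, ← heq]
        obtain ⟨hv, -⟩ := Walk.concat_inj this
        exact ⟨hxr, hv⟩
    · right
      have hpath : ((pv x : T.Walk r x).concat hxy).IsPath :=
        concat_isPath (pv x).2 hxy hy
      have heq : (pv y : T.Walk r y) = (pv x : T.Walk r x).concat hxy :=
        huniq y _ hpath
      have hyr : y ≠ r := by
        intro h
        subst h
        rw [hnilr] at heq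
        have := congrArg Walk.length heq
        rw [Walk.length_concat] at this
        simp at this
      obtain ⟨h, q, hq, he⟩ := hP y hyr
      have : q.concat h = (pv x : T.Walk r x).concat hxy := by
        rw [← he, ← heq]
      obtain ⟨hv, -⟩ := Walk.concat_inj this
      exact ⟨hyr, hv⟩


lemma emb {k n : ℕ} (c : Fin n → Fin n → ℕ)
    (hsym : ∀ u v, c u v = c v u) (hmono : MonoC3Free n c)
    (T : SimpleGraph (Fin (k + 1))) (r : Fin (k + 1))
    (P : Fin (k + 1) → Fin (k + 1)) (ρ : Fin (k + 1) → ℕ)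
    (H2 : ∀ v, v ≠ r → ρ (P v) < ρ v)
    (H3 : ∀ x y, T.Adj x y → (x ≠ r ∧ P x = y) ∨ (y ≠ r ∧ P y = x)) :
    ∀ (a : ℕ) (A : Finset (Fin (k + 1))), A.card ≤ a → r ∈ A →
      (∀ u ∈ A, u ≠ r → P u ∈ A) →
      ∀ S : Finset (Fin n), (A.card + 1).factorial ≤ S.card →
      ∃ φ : Fin (k + 1) → Fin n,
        (∀ u ∈ A, φ u ∈ S) ∧ Set.InjOn φ ↑A ∧
        (∀ x ∈ A, ∀ b ∈ A, ∀ d ∈ A, T.Adj x b → T.Adj b d → x ≠ d →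
          c (φ x) (φ b) ≠ c (φ b) (φ d)) := by
  classical
  intro a
  induction a with
  | zero =>
    intro A hA hr _ S _
    rw [Nat.le_zero, Finset.card_eq_zero] at hA
    exact absurd hr (by simp [hA])
  | succ a ih =>
    intro A hcard hr hclosed S hS
    rcases Nat.lt_or_ge A.card (a + 1) with hlt | hge
    · exact ih A (by omega) hr hclosed S hS
    have hAcard : A.card = a + 1 := le_antisymm hcard hge
    rcases Nat.eq_zero_or_pos a with rfl | ha
    · -- A = {r}
      have hA : A = {r} := by
        obtain ⟨x, hx⟩ := Finset.card_eq_one.mp hAcard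
        rw [hx] at hr ⊢
        rw [Finset.mem_singleton.mp hr]
      obtain ⟨s, hs⟩ : S.Nonempty := Finset.card_pos.mp (by
        have h2 : 0 < (A.card + 1).factorial := Nat.factorial_pos _
        omega)
      refine ⟨fun _ => s, fun _ _ => hs, ?_, ?_⟩
      · intro x hx y hy _
        rw [hA, Finset.coe_singleton, Set.mem_singleton_iff] at hx hy
        rw [hx, hy]
      · intro x hx b hb d hd hxb _ _
        exfalso
        rw [hA, Finset.mem_singleton] at hx hb
        rw [hx, hb] at hxb
        exact T.irrefl hxb
    · -- main step
      have hne : (A.erase r).Nonempty := by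
        rw [← Finset.card_pos, Finset.card_erase_of_mem hr]
        omega
      obtain ⟨v, hvA', hvmax⟩ := Finset.exists_max_image (A.erase r) ρ hne
      have hvr : v ≠ r := Finset.ne_of_mem_erase hvA'
      have hvA : v ∈ A := Finset.mem_of_mem_erase hvA'
      set p := P v with hp
      have hpA : p ∈ A := hclosed v hvA hvr
      have hpv : p ≠ v := by
        intro h
        have h2 := H2 v hvr
        rw [hp] at h
        rw [h] at h2
        exact lt_irrefl _ h2
      set A' := A.erase v with hA'
      have hrA' : r ∈ A' := Finset.mem_erase.mpr ⟨Ne.symm hvr, hr⟩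
      have hpA' : p ∈ A' := Finset.mem_erase.mpr ⟨hpv, hpA⟩
      have hA'card : A'.card = a := by
        rw [hA', Finset.card_erase_of_mem hvA, hAcard]
        omega
      have hmemA' : ∀ u, u ∈ A' ↔ (u ≠ v ∧ u ∈ A) := fun u => Finset.mem_erase
      have hchildless : ∀ u ∈ A, u ≠ r → P u ≠ v := by
        intro u huA hur hPu
        have h1 : ρ u ≤ ρ v := hvmax u (Finset.mem_erase.mpr ⟨hur, huA⟩)
        have h2 := H2 u hur
        rw [hPu] at h2
        omega
      have hclosed' : ∀ u ∈ A', u ≠ r → P u ∈ A' := by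
        intro u hu hur
        exact Finset.mem_erase.mpr
          ⟨hchildless u (Finset.mem_of_mem_erase hu) hur,
           hclosed u (Finset.mem_of_mem_erase hu) hur⟩
      have hnbrv : ∀ u ∈ A, T.Adj u v → u = p := by
        intro u huA hadj
        rcases H3 u v hadj with ⟨hur, hPu⟩ | ⟨-, hPv⟩
        · exact absurd hPu (hchildless u huA hur)
        · exact hPv.symm
      -- single-copy existence from induction hypothesis
      have Hemb : ∀ S' : Finset (Fin n), (a + 1).factorial ≤ S'.card →
          ∃ φ : Fin (k + 1) → Fin n,
            (∀ u ∈ A', φ u ∈ S') ∧ Set.InjOn φ ↑A' ∧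
            (∀ x ∈ A', ∀ b ∈ A', ∀ d ∈ A', T.Adj x b → T.Adj b d → x ≠ d →
              c (φ x) (φ b) ≠ c (φ b) (φ d)) := by
        intro S' hS'
        exact ih A' (le_of_eq hA'card) hrA' hclosed' S' (by rw [hA'card]; exact hS')
      -- disjoint copies
      have copies : ∀ (m : ℕ) (S' : Finset (Fin n)), S' ⊆ S →
          (a + 1).factorial + m * a ≤ S'.card →
          ∃ Φ : Fin (m + 1) → Fin (k + 1) → Fin n,
            (∀ i, (∀ u ∈ A', Φ i u ∈ S') ∧ Set.InjOn (Φ i) ↑A' ∧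
              (∀ x ∈ A', ∀ b ∈ A', ∀ d ∈ A', T.Adj x b → T.Adj b d → x ≠ d →
                c (Φ i x) (Φ i b) ≠ c (Φ i b) (Φ i d))) ∧
            (∀ i j, i ≠ j → ∀ u ∈ A', ∀ w ∈ A', Φ i u ≠ Φ j w) := by
        intro m
        induction m with
        | zero =>
          intro S' _ hc
          obtain ⟨φ, h1, h2, h3⟩ := Hemb S' (le_trans (Nat.le_add_right _ _) hc)
          refine ⟨fun _ => φ, fun _ => ⟨h1, h2, h3⟩, ?_⟩
          intro i j hij
          exact absurd ((Fin.fin_one_eq_zero i).trans (Fin.fin_one_eq_zero j).symm) hij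
        | succ m ihm =>
          intro S' hsub hc
          obtain ⟨φ₀, h₀S, h₀inj, h₀pc⟩ :=
            Hemb S' (le_trans (Nat.le_add_right _ _) hc)
          set S'' := S' \ A'.image φ₀ with hS''
          have hS''sub : S'' ⊆ S' := Finset.sdiff_subset
          have hS''card : (a + 1).factorial + m * a ≤ S''.card := by
            have h1 : S'.card - (A'.image φ₀).card ≤ S''.card :=
              Finset.le_card_sdiff _ _
            have h2 : (A'.image φ₀).card ≤ a := by
              calc (A'.image φ₀).card ≤ A'.card := Finset.card_image_le
                _ = a := hA'card
            have h3 : (m + 1) * a = m * a + a := by ring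
            omega
          obtain ⟨Φ', hΦ'p, hΦ'd⟩ := ihm S'' (hS''sub.trans hsub) hS''card
          have hnotin : ∀ i, ∀ w ∈ A', ∀ u ∈ A', Φ' i w ≠ φ₀ u := by
            intro i w hw u hu h
            have h1 : Φ' i w ∈ S'' := (hΦ'p i).1 w hw
            rw [hS'', Finset.mem_sdiff] at h1
            exact h1.2 (h ▸ Finset.mem_image_of_mem φ₀ hu)
          refine ⟨Fin.cases φ₀ Φ', ?_, ?_⟩
          · intro i
            rcases Fin.eq_zero_or_eq_succ i with rfl | ⟨j, rfl⟩
            · exact ⟨h₀S, h₀inj, h₀pc⟩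
            · refine ⟨fun u hu => hS''sub ((hΦ'p j).1 u hu), (hΦ'p j).2.1,
                (hΦ'p j).2.2⟩
          · intro i j hij u hu w hw
            rcases Fin.eq_zero_or_eq_succ i with rfl | ⟨i', rfl⟩ <;>
              rcases Fin.eq_zero_or_eq_succ j with rfl | ⟨j', rfl⟩
            · exact absurd rfl hij
            · simp only [Fin.cases_zero, Fin.cases_succ]
              exact fun h => hnotin j' w hw u hu h.symm
            · simp only [Fin.cases_zero, Fin.cases_succ]
              exact hnotin i' u hu w hw
            · simp only [Fin.cases_succ]
              exact hΦ'd i' j' (fun h => hij (by rw [h])) u hu w hw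
      set M := (a + 1).factorial with hM
      obtain ⟨Φ, hprops, hdisj⟩ := copies M S (subset_rfl) (by
        rw [hAcard] at hS
        have h1 : (a + 1 + 1).factorial = (a + 2) * M := by rw [hM]; rfl
        have h2 : M + M * a ≤ (a + 2) * M := by nlinarith
        omega)
      set Nbr : Finset (Fin (k + 1)) := A'.filter (fun u => T.Adj p u) with hNbr
      set F : Fin (M + 1) → Finset ℕ :=
        fun i => Nbr.image (fun u => c (Φ i p) (Φ i u)) with hF
      by_cases hext : ∃ (i : Fin (M + 1)) (w : Fin n), w ∈ S ∧
          (∀ u ∈ A', Φ i u ≠ w) ∧ c (Φ i p) w ∉ F i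
      · -- extension exists
        obtain ⟨i, w, hwS, hwnew, hwF⟩ := hext
        refine ⟨fun u => if u = v then w else Φ i u, ?_, ?_, ?_⟩
        · intro u hu
          by_cases huv : u = v
          · simpa [huv] using hwS
          · simp only [if_neg huv]
            exact (hprops i).1 u ((hmemA' u).mpr ⟨huv, hu⟩)
        · intro x hx y hy hxy
          simp only [Finset.mem_coe] at hx hy
          have hxy' : (if x = v then w else Φ i x) = (if y = v then w else Φ i y) := hxy
          by_cases hxv : x = v <;> by_cases hyv : y = v
          · rw [hxv, hyv]
          · exfalso
            rw [if_pos hxv, if_neg hyv] at hxy'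
            exact hwnew y ((hmemA' y).mpr ⟨hyv, hy⟩) hxy'.symm
          · exfalso
            rw [if_neg hxv, if_pos hyv] at hxy'
            exact hwnew x ((hmemA' x).mpr ⟨hxv, hx⟩) hxy'
          · rw [if_neg hxv, if_neg hyv] at hxy'
            exact (hprops i).2.1 (Finset.mem_coe.mpr ((hmemA' x).mpr ⟨hxv, hx⟩))
              (Finset.mem_coe.mpr ((hmemA' y).mpr ⟨hyv, hy⟩)) hxy'
        · intro x hxA b hbA d hdA hxb hbd hxd
          show c (if x = v then w else Φ i x) (if b = v then w else Φ i b) ≠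
            c (if b = v then w else Φ i b) (if d = v then w else Φ i d)
          by_cases hbv : b = v
          · exfalso
            have h1 : x = p := hnbrv x hxA (hbv ▸ hxb)
            have h2 : d = p := hnbrv d hdA (hbv ▸ hbd).symm
            exact hxd (h1.trans h2.symm)
          · by_cases hxv : x = v
            · have hbp : b = p := hnbrv b hbA (hxv ▸ hxb).symm
              have hdv : d ≠ v := fun h => hxd (hxv.trans h.symm)
              rw [if_pos hxv, if_neg hbv, if_neg hdv, hbp]
              intro hcon
              apply hwF
              have hdN : d ∈ Nbr := by
                rw [hNbr, Finset.mem_filter]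
                exact ⟨(hmemA' d).mpr ⟨hdv, hdA⟩, hbp ▸ hbd⟩
              have heq : c (Φ i p) w = c (Φ i p) (Φ i d) := by
                rw [hsym (Φ i p) w]; exact hcon
              rw [hF, heq]
              exact Finset.mem_image_of_mem _ hdN
            · by_cases hdv : d = v
              · have hbp : b = p := hnbrv b hbA (hdv ▸ hbd)
                rw [if_neg hxv, if_neg hbv, if_pos hdv, hbp]
                intro hcon
                apply hwF
                have hxN : x ∈ Nbr := by
                  rw [hNbr, Finset.mem_filter]
                  exact ⟨(hmemA' x).mpr ⟨hxv, hxA⟩, (hbp ▸ hxb).symm⟩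
                have heq : c (Φ i p) w = c (Φ i p) (Φ i x) := by
                  rw [← hcon, hsym (Φ i x) (Φ i p)]
                rw [hF, heq]
                exact Finset.mem_image_of_mem _ hxN
              · rw [if_neg hxv, if_neg hbv, if_neg hdv]
                exact (hprops i).2.2 x ((hmemA' x).mpr ⟨hxv, hxA⟩)
                  b ((hmemA' b).mpr ⟨hbv, hbA⟩) d ((hmemA' d).mpr ⟨hdv, hdA⟩)
                  hxb hbd hxd
      · -- no extension: contradiction via local Ramsey
        exfalso
        push_neg at hext
        set X := Finset.univ.image (fun i : Fin (M + 1) => Φ i p) with hX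
        have hXinj : ∀ i j : Fin (M + 1), Φ i p = Φ j p → i = j := by
          intro i j h
          by_contra hij
          exact hdisj i j hij p hpA' p hpA' h
        have hXcard : X.card = M + 1 := by
          rw [hX, Finset.card_image_of_injective _ (fun i j => hXinj i j),
            Finset.card_univ, Fintype.card_fin]
        have hloc : X.card ≤ L (a - 1) := by
          apply local_ramsey hsym hmono
          intro x hx
          rw [hX] at hx
          obtain ⟨i, -, rfl⟩ := Finset.mem_image.mp hx
          refine ⟨F i, ?_, ?_⟩
          · have h1 : (F i).card ≤ Nbr.card := Finset.card_image_le
            have h2 : Nbr ⊆ A'.erase p := by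
              intro u hu
              rw [hNbr, Finset.mem_filter] at hu
              exact Finset.mem_erase.mpr ⟨hu.2.ne', hu.1⟩
            have h3 : (A'.erase p).card = a - 1 := by
              rw [Finset.card_erase_of_mem hpA', hA'card]
            have h4 := Finset.card_le_card h2
            omega
          · intro y hy hyx
            rw [hX] at hy
            obtain ⟨j, -, rfl⟩ := Finset.mem_image.mp hy
            have hij : i ≠ j := fun h => hyx (by rw [h])
            exact hext i (Φ j p) ((hprops j).1 p hpA')
              (fun u hu => hdisj i j hij u hu p hpA')
        have hL := two_mul_L_le (a - 1)
        have ha2 : a - 1 + 2 = a + 1 := by omega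
        rw [ha2] at hL
        rw [hXcard] at hloc
        omega

end PCTreeAux

/-- Let `k ≥ 1` and let `G` be a mono-`C3`-free edge-colored `K_n`
with `n ≥ (k+2)!`.  Then `G` contains a properly colored copy of every tree with `k`
edges (i.e. of every tree on `k+1` vertices): there is an injective embedding `φ` of
the tree such that any two adjacent edges of the embedded tree get distinct colors. -/
theorem pc_copy_of_every_tree (k n : ℕ) (hk : 1 ≤ k) (c : Fin n → Fin n → ℕ)
    (hsym : ∀ u v, c u v = c v u) (hmono : MonoC3Free n c)
    (hn : (k + 2).factorial ≤ n) :
    ∀ T : SimpleGraph (Fin (k + 1)), T.IsTree →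
      ∃ φ : Fin (k + 1) → Fin n, Function.Injective φ ∧
        ∀ a b d : Fin (k + 1), T.Adj a b → T.Adj b d → a ≠ d →
          c (φ a) (φ b) ≠ c (φ b) (φ d) := by
  intro T hT
  classical
  obtain ⟨r, P, ρ, H1, H2, H3⟩ := PCTreeAux.tree_parent T hT
  have hcardS : ((Finset.univ : Finset (Fin (k + 1))).card + 1).factorial ≤
      (Finset.univ : Finset (Fin n)).card := by
    rw [Finset.card_univ, Finset.card_univ, Fintype.card_fin, Fintype.card_fin]
    exact hn
  obtain ⟨φ, hφS, hφinj, hφpc⟩ :=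
    PCTreeAux.emb c hsym hmono T r P ρ H2 H3 (k + 1) Finset.univ
      (by rw [Finset.card_univ, Fintype.card_fin]) (Finset.mem_univ r)
      (fun u _ _ => Finset.mem_univ _) Finset.univ hcardS
  refine ⟨φ, ?_, ?_⟩
  · intro x y h
    exact hφinj (by simp) (by simp) h
  · intro a b d hab hbd had
    exact hφpc a (Finset.mem_univ a) b (Finset.mem_univ b) d (Finset.mem_univ d)
      hab hbd had
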